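/- arXiv:1403.6817 — 3 statements merged into one kernel-verified Lean document; each statement's English description precedes it below -/
import Mathlib

section
/- The algebra homomorphism Θ : H → ℂ[y₁^±,…,y_n^±]#_αG determined by Θ(x_i) = y_i − (ζt_i/(ζ−1)) y_{i+1}⁻¹ g_i and Θ(g_i) = g_i for all i ∈ {1,…,n} is injective. -/
/-!
Common setup for the twisted graded Hecke algebra associated to the homocyclic
group `G ≅ (ℤ/ℓℤ)^{n-1}` (Gan–Highfield, "Center of twisted graded Hecke
algebras for homocyclic groups").

All indices are 0-based: the paper's `x_i, g_i, t_i, τ_i` (for `i = 1, …, n`)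
correspond to index `i - 1 : Fin n` here; subscripts are taken mod `n` via the
(wrap-around) addition of `Fin n`.
-/

noncomputable section

namespace TGHA

/-- `ζ` raised to an exponent in `ZMod ℓ` (representative taken in `{0, …, ℓ-1}`). -/
def zp (ℓ : ℕ) (ζ : ℂ) (z : ZMod ℓ) : ℂ := ζ ^ z.val

/-- Given the vector `a` of diagonal exponents of a group element
`g = diag(ζ^{a 0}, …, ζ^{a (n-1)})`, `pS n ℓ a k` is the exponent `i_k` of `g_k` when
`g` is written as `g₁^{i₁} ⋯ g_{n-1}^{i_{n-1}}`, namely the partial sum `a 0 + ⋯ + a (k-1)`. -/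
def pS (n ℓ : ℕ) [NeZero n] (a : Fin n → ZMod ℓ) (k : ℕ) : ZMod ℓ :=
  ∑ m ∈ Finset.range k, a (Fin.ofNat n m)

/-- The 2-cocycle `α : G × G → ℂˣ`,
`α(g₁^{i₁}⋯g_{n-1}^{i_{n-1}}, g₁^{j₁}⋯g_{n-1}^{j_{n-1}}) = ζ^{-i₁j₂ - i₂j₃ - ⋯ - i_{n-2}j_{n-1}}`,
expressed in terms of the vectors of diagonal exponents of the two group elements. -/
def coc (n ℓ : ℕ) [NeZero n] (ζ : ℂ) (a b : Fin n → ZMod ℓ) : ℂ :=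
  zp ℓ ζ (-∑ k ∈ Finset.Icc 1 (n - 2), pS n ℓ a k * pS n ℓ b (k + 1))

/-- The homocyclic group `G`: diagonal matrices `g = diag(ζ^{a 0}, …, ζ^{a (n-1)})` in
`SL_n(ℂ)` with `g^ℓ = 1`, identified with their vectors `a` of exponents; the condition
`det g = 1` is `∑ i, a i = 0`. Written additively. -/
def Gsub (n ℓ : ℕ) : AddSubgroup (Fin n → ZMod ℓ) where
  carrier := {a | ∑ i, a i = 0}
  zero_mem' := by simp
  add_mem' := by
    intro a b ha hb
    simp only [Set.mem_setOf_eq] at *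
    simp [Finset.sum_add_distrib, ha, hb]
  neg_mem' := by
    intro a ha
    simp only [Set.mem_setOf_eq] at *
    simp [ha]

abbrev G (n ℓ : ℕ) := ↥(Gsub n ℓ)

/-- The vector of diagonal exponents of the generator `g_i`
(`g_i x_i = ζ x_i`, `g_i x_{i+1} = ζ⁻¹ x_{i+1}`, `g_i x_j = x_j` otherwise). -/
def gvec (n ℓ : ℕ) [NeZero n] (i : Fin n) : Fin n → ZMod ℓ :=
  Pi.single i 1 - Pi.single (i + 1) 1

lemma gvec_mem (n ℓ : ℕ) [NeZero n] (i : Fin n) : gvec n ℓ i ∈ Gsub n ℓ := by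
  show ∑ j, gvec n ℓ i j = 0
  simp [gvec, Finset.sum_sub_distrib]

/-- The generator `g_i` as an element of `G`. -/
def gelt (n ℓ : ℕ) [NeZero n] (i : Fin n) : G n ℓ := ⟨gvec n ℓ i, gvec_mem n ℓ i⟩

/-- The defining relations of the twisted graded Hecke algebra `H`, as a quotient of the
free algebra on generators `x_i` (`Sum.inl i`) and `u_g`, `g ∈ G` (`Sum.inr g`): the
relations `u_g u_h = α(g,h) u_{gh}`, `u_1 = 1`, `u_g x_i = ζ^{a_i} x_i u_g` present the
crossed product `TV #_α G`, and the last two relations are the Hecke relations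
`x_i x_{i+1} - x_{i+1} x_i = t_i g_i` and `x_i x_j = x_j x_i` for `|i - j| ∉ {1, n-1}`. -/
inductive Rel (n ℓ : ℕ) [NeZero n] (ζ : ℂ) (t : Fin n → ℂ) :
    FreeAlgebra ℂ (Fin n ⊕ G n ℓ) → FreeAlgebra ℂ (Fin n ⊕ G n ℓ) → Prop
  | grp (g h : G n ℓ) :
      Rel n ℓ ζ t (FreeAlgebra.ι ℂ (Sum.inr g) * FreeAlgebra.ι ℂ (Sum.inr h))
        (coc n ℓ ζ g.1 h.1 • FreeAlgebra.ι ℂ (Sum.inr (g + h)))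
  | one : Rel n ℓ ζ t (FreeAlgebra.ι ℂ (Sum.inr (0 : G n ℓ))) 1
  | gx (g : G n ℓ) (i : Fin n) :
      Rel n ℓ ζ t (FreeAlgebra.ι ℂ (Sum.inr g) * FreeAlgebra.ι ℂ (Sum.inl i))
        (zp ℓ ζ (g.1 i) • (FreeAlgebra.ι ℂ (Sum.inl i) * FreeAlgebra.ι ℂ (Sum.inr g)))
  | hecke (i : Fin n) :
      Rel n ℓ ζ t
        (FreeAlgebra.ι ℂ (Sum.inl i) * FreeAlgebra.ι ℂ (Sum.inl (i + 1)) -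
          FreeAlgebra.ι ℂ (Sum.inl (i + 1)) * FreeAlgebra.ι ℂ (Sum.inl i))
        (t i • FreeAlgebra.ι ℂ (Sum.inr (gelt n ℓ i)))
  | commx (i j : Fin n) (h₁ : j ≠ i + 1) (h₂ : i ≠ j + 1) :
      Rel n ℓ ζ t (FreeAlgebra.ι ℂ (Sum.inl i) * FreeAlgebra.ι ℂ (Sum.inl j))
        (FreeAlgebra.ι ℂ (Sum.inl j) * FreeAlgebra.ι ℂ (Sum.inl i))

/-- The twisted graded Hecke algebra `H`. -/
abbrev H (n ℓ : ℕ) [NeZero n] (ζ : ℂ) (t : Fin n → ℂ) := RingQuot (Rel n ℓ ζ t)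

/-- The image of `x_i` in `H`. -/
def xx (n ℓ : ℕ) [NeZero n] (ζ : ℂ) (t : Fin n → ℂ) (i : Fin n) : H n ℓ ζ t :=
  RingQuot.mkAlgHom ℂ (Rel n ℓ ζ t) (FreeAlgebra.ι ℂ (Sum.inl i))

/-- The image of `g ∈ G` in `H`. -/
def ug (n ℓ : ℕ) [NeZero n] (ζ : ℂ) (t : Fin n → ℂ) (g : G n ℓ) : H n ℓ ζ t :=
  RingQuot.mkAlgHom ℂ (Rel n ℓ ζ t) (FreeAlgebra.ι ℂ (Sum.inr g))

/-- Index set for the basis `y^p u_g` of the crossed product `ℂ[y₁^±,…,y_n^±] #_α G`. -/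
abbrev M (n ℓ : ℕ) := (Fin n → ℤ) × G n ℓ

/-- `χ(g, p)`: the scalar by which `g = diag(ζ^{a 0}, …)` acts on the Laurent monomial `y^p`;
for `g = g_i` it is `ζ^{p_i - p_{i+1}}`. -/
def chi (n ℓ : ℕ) [NeZero n] (ζ : ℂ) (a : Fin n → ZMod ℓ) (p : Fin n → ℤ) : ℂ :=
  zp ℓ ζ (∑ j, a j * (p j : ZMod ℓ))

/-- Structure constants of the crossed product `ℂ[y₁^±,…,y_n^±] #_α G` with respect to its
basis: `(y^p u_g) (y^q u_h) = α(g,h) χ(g,q) y^{p+q} u_{gh}`. -/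
def sigma (n ℓ : ℕ) [NeZero n] (ζ : ℂ) (a b : M n ℓ) : ℂ :=
  coc n ℓ ζ a.2.1 b.2.1 * chi n ℓ ζ a.2.1 b.1

/-- The basis element `y^p u_g` (`a = (p, g)`) of the crossed product
`ℂ[y₁^±,…,y_n^±] #_α G`, realized faithfully as the operator of left multiplication by it
on the underlying vector space of the crossed product. -/
def Top (n ℓ : ℕ) [NeZero n] (ζ : ℂ) (a : M n ℓ) : Module.End ℂ (M n ℓ →₀ ℂ) :=
  Finsupp.lsum ℂ fun b => sigma n ℓ ζ a b • Finsupp.lsingle (a + b)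

/-- The algebra containing (the left regular realization of) the crossed product
`ℂ[y₁^±,…,y_n^±] #_α G`. -/
abbrev A (n ℓ : ℕ) := Module.End ℂ (M n ℓ →₀ ℂ)

/-- The element `u_g`, `g ∈ G`, of the crossed product. -/
def Uy (n ℓ : ℕ) [NeZero n] (ζ : ℂ) (g : G n ℓ) : A n ℓ := Top n ℓ ζ (0, g)

/-- The element `y_i` of the crossed product. -/
def Ygen (n ℓ : ℕ) [NeZero n] (ζ : ℂ) (i : Fin n) : A n ℓ := Top n ℓ ζ (Pi.single i 1, 0)

/-- The element `y_i⁻¹` of the crossed product. -/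
def Yinv (n ℓ : ℕ) [NeZero n] (ζ : ℂ) (i : Fin n) : A n ℓ := Top n ℓ ζ (-Pi.single i 1, 0)

/-- `τ_i = t_i/(ζ-1)` for `i = 1, …, n-1` and `τ_n = ζ t_n/(ζ - 1)`. -/
def tau (n : ℕ) (ζ : ℂ) (t : Fin n → ℂ) (i : Fin n) : ℂ :=
  if (i : ℕ) = n - 1 then ζ * t i / (ζ - 1) else t i / (ζ - 1)

/-- `τ̃_i = τ_i^ℓ` for `i = 1, …, n-1` and `τ̃_n = (-1)^{n(ℓ-1)} τ_n^ℓ`. -/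
def taut (n ℓ : ℕ) (ζ : ℂ) (t : Fin n → ℂ) (i : Fin n) : ℂ :=
  if (i : ℕ) = n - 1 then (-1) ^ (n * (ℓ - 1)) * tau n ζ t i ^ ℓ else tau n ζ t i ^ ℓ

/-- The index set `J`: subsets `{i₁ < ⋯ < i_k}` of `{1, …, n}` with
`|i_r - i_s| ∉ {1, n-1}`, i.e. containing no pair of (cyclically) adjacent indices. -/
def Jset (n : ℕ) [NeZero n] : Finset (Finset (Fin n)) :=
  Finset.univ.filter fun S => ∀ i ∈ S, ∀ j ∈ S, j ≠ i + 1

/-- The exponent vector `δ - ε_{i₁} - ⋯ - ε_{i_k}` for `S = {i₁, …, i_k} ∈ J`: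
the entry at `j` is `0` if some `ε_i`, `i ∈ S`, covers position `j` (i.e. `j ∈ S` or
`j - 1 ∈ S` cyclically) and `1` otherwise. -/
def expS (n : ℕ) [NeZero n] (S : Finset (Fin n)) (j : Fin n) : ℕ :=
  if j ∈ S ∨ j - 1 ∈ S then 0 else 1

/-- The ordered monomial `x₁^{p₁} ⋯ x_n^{p_n} ∈ H`. -/
def xpow (n ℓ : ℕ) [NeZero n] (ζ : ℂ) (t : Fin n → ℂ) (p : Fin n → ℕ) : H n ℓ ζ t :=
  ((List.finRange n).map fun j => xx n ℓ ζ t j ^ p j).prod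

/-- The product `g_{i₁} * ⋯ * g_{i_k} ∈ H` over `S = {i₁ < ⋯ < i_k}` (in increasing
order); since `u_g u_h = α(g,h) u_{gh}` holds in `H`, this is the `*`-product. -/
def gprodS (n ℓ : ℕ) [NeZero n] (ζ : ℂ) (t : Fin n → ℂ) (S : Finset (Fin n)) :
    H n ℓ ζ t :=
  ((S.sort (· ≤ ·)).map fun i => ug n ℓ ζ t (gelt n ℓ i)).prod

/-- The element `w = Σ_{{i₁<⋯<i_k} ∈ J} τ_{i₁} ⋯ τ_{i_k} x^{δ-ε_{i₁}-⋯-ε_{i_k}}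
g_{i₁} * ⋯ * g_{i_k}` of `H`. -/
def w (n ℓ : ℕ) [NeZero n] (ζ : ℂ) (t : Fin n → ℂ) : H n ℓ ζ t :=
  ∑ S ∈ Jset n, (∏ i ∈ S, tau n ζ t i) • (xpow n ℓ ζ t (expS n S) * gprodS n ℓ ζ t S)

/-- `ν_r = (-1)^r (ℓ/(ℓ-r)) C(ℓ-r, r)`. -/
def nu (ℓ r : ℕ) : ℂ := (-1) ^ r * ((ℓ : ℂ) / ((ℓ : ℂ) - (r : ℂ))) * (Nat.choose (ℓ - r) r : ℂ)

/-- The polynomial `F` in the variables `a_i = X (Sum.inl i)` and `b = X (Sum.inr ())`. -/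
def Fpoly (n ℓ : ℕ) [NeZero n] (ζ : ℂ) (t : Fin n → ℂ) : MvPolynomial (Fin n ⊕ Unit) ℂ :=
  (∑ S ∈ Jset n, (∏ i ∈ S, taut n ℓ ζ t i) •
      ∏ j : Fin n, MvPolynomial.X (Sum.inl j) ^ expS n S j) -
    ∑ r ∈ Finset.range (ℓ / 2 + 1),
      ((-1) ^ (n * r) * ζ ^ ((n - 2) * r) * nu ℓ r * (∏ i : Fin n, tau n ζ t i) ^ r) •
        MvPolynomial.X (Sum.inr ()) ^ (ℓ - 2 * r)

end TGHA
namespace TGHA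
section Aux

variable {n ℓ : ℕ} [NeZero n] {ζ : ℂ} {t : Fin n → ℂ}

/-- word product in H -/
noncomputable def wp (n ℓ : ℕ) [NeZero n] (ζ : ℂ) (t : Fin n → ℂ) (l : List (Fin n)) :
    H n ℓ ζ t := (l.map (xx n ℓ ζ t)).prod

lemma wp_nil : wp n ℓ ζ t [] = 1 := rfl

lemma wp_cons (i : Fin n) (l : List (Fin n)) :
    wp n ℓ ζ t (i :: l) = xx n ℓ ζ t i * wp n ℓ ζ t l := by
  simp [wp]

lemma wp_append (l₁ l₂ : List (Fin n)) :
    wp n ℓ ζ t (l₁ ++ l₂) = wp n ℓ ζ t l₁ * wp n ℓ ζ t l₂ := by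
  simp [wp]

lemma h_grp (g h : G n ℓ) :
    ug n ℓ ζ t g * ug n ℓ ζ t h = coc n ℓ ζ g.1 h.1 • ug n ℓ ζ t (g + h) := by
  have := RingQuot.mkAlgHom_rel ℂ (Rel.grp (n := n) (ℓ := ℓ) (ζ := ζ) (t := t) g h)
  simpa [ug, map_mul, map_smul] using this

lemma h_one : ug n ℓ ζ t 0 = 1 := by
  have := RingQuot.mkAlgHom_rel ℂ (Rel.one (n := n) (ℓ := ℓ) (ζ := ζ) (t := t))
  simpa [ug, map_one] using this

lemma h_gx (g : G n ℓ) (i : Fin n) :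
    ug n ℓ ζ t g * xx n ℓ ζ t i = zp ℓ ζ (g.1 i) • (xx n ℓ ζ t i * ug n ℓ ζ t g) := by
  have := RingQuot.mkAlgHom_rel ℂ (Rel.gx (n := n) (ℓ := ℓ) (ζ := ζ) (t := t) g i)
  simpa [ug, xx, map_mul, map_smul] using this

lemma h_hecke (i : Fin n) :
    xx n ℓ ζ t i * xx n ℓ ζ t (i + 1) =
      xx n ℓ ζ t (i + 1) * xx n ℓ ζ t i + t i • ug n ℓ ζ t (gelt n ℓ i) := by
  have := RingQuot.mkAlgHom_rel ℂ (Rel.hecke (n := n) (ℓ := ℓ) (ζ := ζ) (t := t) i)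
  simp only [map_sub, map_mul, map_smul] at this
  have h2 : xx n ℓ ζ t i * xx n ℓ ζ t (i+1) - xx n ℓ ζ t (i+1) * xx n ℓ ζ t i
      = t i • ug n ℓ ζ t (gelt n ℓ i) := this
  linear_combination (norm := module) h2

lemma h_comm (i j : Fin n) (h₁ : j ≠ i + 1) (h₂ : i ≠ j + 1) :
    xx n ℓ ζ t i * xx n ℓ ζ t j = xx n ℓ ζ t j * xx n ℓ ζ t i := by
  have := RingQuot.mkAlgHom_rel ℂ (Rel.commx (n := n) (ℓ := ℓ) (ζ := ζ) (t := t) i j h₁ h₂)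
  simpa [xx, map_mul] using this

lemma corr (i a : Fin n) :
    ∃ (s : ℂ) (g₀ : G n ℓ),
      xx n ℓ ζ t i * xx n ℓ ζ t a = xx n ℓ ζ t a * xx n ℓ ζ t i + s • ug n ℓ ζ t g₀ := by
  by_cases h1 : a = i + 1
  · subst h1
    exact ⟨t i, gelt n ℓ i, h_hecke i⟩
  · by_cases h2 : i = a + 1
    · refine ⟨-(t a), gelt n ℓ a, ?_⟩
      have := h_hecke (n := n) (ℓ := ℓ) (ζ := ζ) (t := t) a
      rw [← h2] at this
      rw [this]
      module
    · exact ⟨0, 0, by rw [h_comm i a h1 h2]; simp⟩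

lemma ug_mul_wp (g : G n ℓ) (l : List (Fin n)) :
    ∃ c : ℂ, ug n ℓ ζ t g * wp n ℓ ζ t l = c • (wp n ℓ ζ t l * ug n ℓ ζ t g) := by
  induction l with
  | nil => exact ⟨1, by simp [wp_nil]⟩
  | cons i l ih =>
    obtain ⟨c, hc⟩ := ih
    refine ⟨zp ℓ ζ (g.1 i) * c, ?_⟩
    rw [wp_cons, ← mul_assoc, h_gx, smul_mul_assoc, mul_assoc, hc,
      mul_smul_comm, smul_smul, ← mul_assoc]

end Aux
end TGHA
namespace TGHA
section Aux2

variable {n ℓ : ℕ} [NeZero n] {ζ : ℂ} {t : Fin n → ℂ}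

/-- span of sorted words (length ≤ k) times group elements -/
noncomputable def SS (n ℓ : ℕ) [NeZero n] (ζ : ℂ) (t : Fin n → ℂ) (k : ℕ) :
    Submodule ℂ (H n ℓ ζ t) :=
  Submodule.span ℂ {z | ∃ v g, List.Pairwise (· ≤ ·) v ∧ v.length ≤ k ∧
    z = wp n ℓ ζ t v * ug n ℓ ζ t g}

/-- span of all sorted words times group elements -/
noncomputable def Bspan (n ℓ : ℕ) [NeZero n] (ζ : ℂ) (t : Fin n → ℂ) :
    Submodule ℂ (H n ℓ ζ t) :=
  Submodule.span ℂ {z | ∃ v g, List.Pairwise (· ≤ ·) v ∧ z = wp n ℓ ζ t v * ug n ℓ ζ t g}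

lemma SS_le_SS {k m : ℕ} (h : k ≤ m) : SS n ℓ ζ t k ≤ SS n ℓ ζ t m :=
  Submodule.span_mono (fun z ⟨v, g, hs, hl, he⟩ => ⟨v, g, hs, hl.trans h, he⟩)

lemma SS_le_Bspan (k : ℕ) : SS n ℓ ζ t k ≤ Bspan n ℓ ζ t :=
  Submodule.span_mono (fun z ⟨v, g, hs, _, he⟩ => ⟨v, g, hs, he⟩)

lemma mem_SS {v : List (Fin n)} (hs : List.Pairwise (· ≤ ·) v) {k : ℕ} (hl : v.length ≤ k)
    (g : G n ℓ) : wp n ℓ ζ t v * ug n ℓ ζ t g ∈ SS n ℓ ζ t k :=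
  Submodule.subset_span ⟨v, g, hs, hl, rfl⟩

lemma SS_mul_ug {k : ℕ} {z : H n ℓ ζ t} (hz : z ∈ SS n ℓ ζ t k) (g : G n ℓ) :
    z * ug n ℓ ζ t g ∈ SS n ℓ ζ t k := by
  induction hz using Submodule.span_induction with
  | mem z hzm =>
    obtain ⟨v, h, hs, hl, rfl⟩ := hzm
    rw [mul_assoc, h_grp, mul_smul_comm]
    exact Submodule.smul_mem _ _ (mem_SS hs hl _)
  | zero => simp
  | add x y _ _ hx hy => rw [add_mul]; exact add_mem hx hy
  | smul c x _ hx => rw [smul_mul_assoc]; exact Submodule.smul_mem _ _ hx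

lemma insertion :
    ∀ (k : ℕ) (l : List (Fin n)), List.Pairwise (· ≤ ·) l → l.length ≤ k → ∀ i : Fin n,
      ∃ r ∈ SS n ℓ ζ t l.length,
        xx n ℓ ζ t i * wp n ℓ ζ t l
          = wp n ℓ ζ t (l.orderedInsert (· ≤ ·) i) + r := by
  intro k
  induction k using Nat.strong_induction_on with
  | _ k IH =>
    have xmul : ∀ (m : ℕ), m < k → ∀ z ∈ SS n ℓ ζ t m, ∀ j : Fin n,
        xx n ℓ ζ t j * z ∈ SS n ℓ ζ t (m + 1) := by
      intro m hm z hz j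
      induction hz using Submodule.span_induction with
      | mem z hzm =>
        obtain ⟨v, g, hs, hl, rfl⟩ := hzm
        obtain ⟨r, hr, he⟩ := IH m hm v hs hl j
        rw [← mul_assoc, he, add_mul]
        refine add_mem (mem_SS (hs.orderedInsert j v) ?_ g)
          (SS_mul_ug (SS_le_SS (by omega) hr) g)
        rw [List.orderedInsert_length]
        omega
      | zero => simp
      | add x y _ _ hx hy => rw [mul_add]; exact add_mem hx hy
      | smul c x _ hx => rw [mul_smul_comm]; exact Submodule.smul_mem _ _ hx
    intro l hs hl i
    match l with
    | [] =>
      refine ⟨0, zero_mem _, ?_⟩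
      simp [wp_nil, List.orderedInsert, wp_cons]
    | a :: rest =>
      have hrl : rest.length < k := by
        simp only [List.length_cons] at hl; omega
      by_cases hia : i ≤ a
      · refine ⟨0, zero_mem _, ?_⟩
        simp [List.orderedInsert, if_pos hia, wp_cons]
      · obtain ⟨s, g₀, hcorr⟩ := corr (t := t) i a
        obtain ⟨r₁, hr₁, he₁⟩ := IH rest.length hrl rest hs.of_cons le_rfl i
        obtain ⟨c, hc⟩ := ug_mul_wp (t := t) g₀ rest
        refine ⟨xx n ℓ ζ t a * r₁ + (s * c) • (wp n ℓ ζ t rest * ug n ℓ ζ t g₀),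
          ?_, ?_⟩
        · refine add_mem ?_ (Submodule.smul_mem _ _ ?_)
          · have := xmul rest.length hrl r₁ hr₁ a
            exact SS_le_SS (by simp) this
          · exact SS_le_SS (by simp) (mem_SS hs.of_cons le_rfl g₀)
        · rw [List.orderedInsert, if_neg hia, wp_cons, wp_cons, ← mul_assoc, hcorr,
            add_mul, smul_mul_assoc, hc, mul_assoc, he₁, mul_add]
          module

lemma xmul' (m : ℕ) {z : H n ℓ ζ t} (hz : z ∈ SS n ℓ ζ t m) (j : Fin n) :
    xx n ℓ ζ t j * z ∈ SS n ℓ ζ t (m + 1) := by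
  induction hz using Submodule.span_induction with
  | mem z hzm =>
    obtain ⟨v, g, hsv, hlv, rfl⟩ := hzm
    obtain ⟨r, hr, he⟩ := insertion m v hsv hlv j
    rw [← mul_assoc, he, add_mul]
    refine add_mem (mem_SS (hsv.orderedInsert j v) ?_ g)
      (SS_mul_ug (SS_le_SS (by omega) hr) g)
    rw [List.orderedInsert_length]
    omega
  | zero => simp
  | add x y _ _ hx hy => rw [mul_add]; exact add_mem hx hy
  | smul c x _ hx => rw [mul_smul_comm]; exact Submodule.smul_mem _ _ hx

lemma word_mem (l : List (Fin n)) : wp n ℓ ζ t l ∈ SS n ℓ ζ t l.length := by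
  induction l with
  | nil =>
    have : wp n ℓ ζ t ([] : List (Fin n)) = wp n ℓ ζ t [] * ug n ℓ ζ t 0 := by
      rw [h_one, mul_one]
    rw [this]
    exact mem_SS List.Pairwise.nil le_rfl 0
  | cons i l ih =>
    rw [wp_cons]
    exact xmul' l.length ih i

lemma Bspan_mul_ug {z : H n ℓ ζ t} (hz : z ∈ Bspan n ℓ ζ t) (g : G n ℓ) :
    z * ug n ℓ ζ t g ∈ Bspan n ℓ ζ t := by
  induction hz using Submodule.span_induction with
  | mem z hzm =>
    obtain ⟨v, h, hs, rfl⟩ := hzm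
    rw [mul_assoc, h_grp, mul_smul_comm]
    exact Submodule.smul_mem _ _ (Submodule.subset_span ⟨v, h + g, hs, rfl⟩)
  | zero => simp
  | add x y _ _ hx hy => rw [add_mul]; exact add_mem hx hy
  | smul c x _ hx => rw [smul_mul_assoc]; exact Submodule.smul_mem _ _ hx

lemma Bspan_mul {z₁ z₂ : H n ℓ ζ t} (h₁ : z₁ ∈ Bspan n ℓ ζ t) (h₂ : z₂ ∈ Bspan n ℓ ζ t) :
    z₁ * z₂ ∈ Bspan n ℓ ζ t := by
  induction h₁ using Submodule.span_induction with
  | mem z hzm =>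
    obtain ⟨v, g, hs, rfl⟩ := hzm
    clear hs
    induction h₂ using Submodule.span_induction with
    | mem z' hzm' =>
      obtain ⟨v', g', hs', rfl⟩ := hzm'
      obtain ⟨c, hc⟩ := ug_mul_wp (t := t) g v'
      have key : (wp n ℓ ζ t v * ug n ℓ ζ t g) * (wp n ℓ ζ t v' * ug n ℓ ζ t g')
          = (c * coc n ℓ ζ g.1 g'.1) •
            (wp n ℓ ζ t (v ++ v') * (ug n ℓ ζ t (g + g'))) := by
        rw [wp_append, mul_assoc, ← mul_assoc (ug n ℓ ζ t g), hc, smul_mul_assoc,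
          mul_assoc, h_grp]
        simp only [mul_smul_comm, smul_smul]
        rw [← mul_assoc]
      rw [key]
      refine Submodule.smul_mem _ _ ?_
      exact Bspan_mul_ug (SS_le_Bspan _ (word_mem (v ++ v'))) _
    | zero => simp
    | add x y _ _ hx hy => rw [mul_add]; exact add_mem hx hy
    | smul c x _ hx => rw [mul_smul_comm]; exact Submodule.smul_mem _ _ hx
  | zero => simp
  | add x y _ _ hx hy => rw [add_mul]; exact add_mem hx hy
  | smul c x _ hx => rw [smul_mul_assoc]; exact Submodule.smul_mem _ _ hx

lemma Bspan_top : Bspan n ℓ ζ t = ⊤ := by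
  rw [Submodule.eq_top_iff']
  intro h
  obtain ⟨z, rfl⟩ := RingQuot.mkAlgHom_surjective ℂ (Rel n ℓ ζ t) h
  induction z using FreeAlgebra.induction with
  | grade0 r =>
    rw [AlgHom.commutes, Algebra.algebraMap_eq_smul_one]
    refine Submodule.smul_mem _ _ ?_
    have : (1 : H n ℓ ζ t) = wp n ℓ ζ t [] * ug n ℓ ζ t 0 := by rw [h_one, mul_one, wp_nil]
    rw [this]
    exact Submodule.subset_span ⟨[], 0, List.Pairwise.nil, rfl⟩
  | grade1 x =>
    match x with
    | Sum.inl i =>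
      have : RingQuot.mkAlgHom ℂ (Rel n ℓ ζ t) (FreeAlgebra.ι ℂ (Sum.inl i))
          = wp n ℓ ζ t [i] * ug n ℓ ζ t 0 := by
        rw [h_one, mul_one]
        simp [wp, xx]
      rw [this]
      exact Submodule.subset_span ⟨[i], 0, List.pairwise_singleton _ i, rfl⟩
    | Sum.inr g =>
      have : RingQuot.mkAlgHom ℂ (Rel n ℓ ζ t) (FreeAlgebra.ι ℂ (Sum.inr g))
          = wp n ℓ ζ t [] * ug n ℓ ζ t g := by
        rw [wp_nil, one_mul]; rfl
      rw [this]
      exact Submodule.subset_span ⟨[], g, List.Pairwise.nil, rfl⟩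
  | mul a b ha hb => rw [map_mul]; exact Bspan_mul ha hb
  | add a b ha hb => rw [map_add]; exact add_mem ha hb

end Aux2
end TGHA
namespace TGHA
section Aux3

variable {n ℓ : ℕ} [NeZero n] [NeZero ℓ] {ζ : ℂ}

lemma zp_zero : zp ℓ ζ 0 = 1 := by simp [zp]

lemma zp_add (hz : ζ ^ ℓ = 1) (x y : ZMod ℓ) : zp ℓ ζ (x + y) = zp ℓ ζ x * zp ℓ ζ y := by
  unfold zp
  rw [← pow_add]
  have key : ∀ m : ℕ, ζ ^ m = ζ ^ (m % ℓ) := by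
    intro m
    conv_lhs => rw [← Nat.div_add_mod m ℓ]
    rw [pow_add, pow_mul, hz, one_pow, one_mul]
  rw [ZMod.val_add, ← key]

lemma zp_ne_zero (hζ0 : ζ ≠ 0) (x : ZMod ℓ) : zp ℓ ζ x ≠ 0 := pow_ne_zero _ hζ0

lemma pS_zero (k : ℕ) : pS n ℓ (0 : Fin n → ZMod ℓ) k = 0 := by simp [pS]

lemma pS_add (a b : Fin n → ZMod ℓ) (k : ℕ) :
    pS n ℓ (a + b) k = pS n ℓ a k + pS n ℓ b k := by
  simp [pS, Finset.sum_add_distrib]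

lemma coc_zero_left (b : Fin n → ZMod ℓ) : coc n ℓ ζ 0 b = 1 := by
  simp [coc, pS_zero, zp_zero]

lemma coc_zero_right (a : Fin n → ZMod ℓ) : coc n ℓ ζ a 0 = 1 := by
  simp [coc, pS_zero, zp_zero]

lemma chi_zero_left (p : Fin n → ℤ) : chi n ℓ ζ 0 p = 1 := by
  simp [chi, zp_zero]

lemma chi_zero_right (a : Fin n → ZMod ℓ) : chi n ℓ ζ a 0 = 1 := by
  simp [chi, zp_zero]

lemma chi_add_left (hz : ζ ^ ℓ = 1) (a b : Fin n → ZMod ℓ) (p : Fin n → ℤ) :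
    chi n ℓ ζ (a + b) p = chi n ℓ ζ a p * chi n ℓ ζ b p := by
  unfold chi
  rw [← zp_add hz]
  congr 1
  simp [add_mul, Finset.sum_add_distrib]

lemma coc_cocycle (hz : ζ ^ ℓ = 1) (a b c : Fin n → ZMod ℓ) :
    coc n ℓ ζ a (b + c) * coc n ℓ ζ b c = coc n ℓ ζ a b * coc n ℓ ζ (a + b) c := by
  unfold coc
  rw [← zp_add hz, ← zp_add hz]
  congr 1
  simp only [pS_add, mul_add, add_mul, Finset.sum_add_distrib]
  ring

lemma Top_single (a b : M n ℓ) (c : ℂ) :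
    Top n ℓ ζ a (Finsupp.single b c) = Finsupp.single (a + b) (sigma n ℓ ζ a b * c) := by
  unfold Top
  rw [Finsupp.lsum_single]
  simp [Finsupp.smul_single, smul_eq_mul]

lemma sigma_y (p : Fin n → ℤ) (b : M n ℓ) : sigma n ℓ ζ ((p, 0) : M n ℓ) b = 1 := by
  simp [sigma, coc_zero_left, chi_zero_left]

lemma Uy_single (g : G n ℓ) (q : Fin n → ℤ) (h : G n ℓ) (c : ℂ) :
    Uy n ℓ ζ g (Finsupp.single ((q, h) : M n ℓ) c)
      = Finsupp.single ((q, g + h) : M n ℓ) ((coc n ℓ ζ g.1 h.1 * chi n ℓ ζ g.1 q) * c) := by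
  rw [Uy, Top_single]
  congr 1
  · simp [Prod.ext_iff]

lemma Ygen_single (i : Fin n) (q : Fin n → ℤ) (h : G n ℓ) (c : ℂ) :
    Ygen n ℓ ζ i (Finsupp.single ((q, h) : M n ℓ) c)
      = Finsupp.single ((Pi.single i 1 + q, h) : M n ℓ) c := by
  rw [Ygen, Top_single, sigma_y, one_mul]
  congr 1
  simp [Prod.ext_iff]

lemma Yinv_single (i : Fin n) (q : Fin n → ℤ) (h : G n ℓ) (c : ℂ) :
    Yinv n ℓ ζ i (Finsupp.single ((q, h) : M n ℓ) c)
      = Finsupp.single ((-Pi.single i 1 + q, h) : M n ℓ) c := by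
  rw [Yinv, Top_single, sigma_y, one_mul]
  congr 1
  simp [Prod.ext_iff]

lemma Uy_mul (hz : ζ ^ ℓ = 1) (g h : G n ℓ) :
    Uy n ℓ ζ g * Uy n ℓ ζ h = coc n ℓ ζ g.1 h.1 • Uy n ℓ ζ (g + h) := by
  refine Finsupp.lhom_ext fun b c => ?_
  obtain ⟨q, k⟩ := b
  rw [Module.End.mul_apply, Uy_single, Uy_single, LinearMap.smul_apply, Uy_single,
    Finsupp.smul_single]
  rw [← add_assoc]
  congr 1
  have hcoe : ((g + h : G n ℓ) : Fin n → ZMod ℓ) = g.1 + h.1 := rfl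
  rw [smul_eq_mul, hcoe, chi_add_left hz]
  have hcc := coc_cocycle hz g.1 h.1 k.1
  have hcoe2 : ((h + k : G n ℓ) : Fin n → ZMod ℓ) = h.1 + k.1 := rfl
  rw [hcoe2]
  linear_combination (chi n ℓ ζ (g : Fin n → ZMod ℓ) q * chi n ℓ ζ (h : Fin n → ZMod ℓ) q * c) * hcc

lemma Uy_zero : Uy n ℓ ζ (0 : G n ℓ) = 1 := by
  refine Finsupp.lhom_ext fun b c => ?_
  obtain ⟨q, k⟩ := b
  rw [Uy_single, Module.End.one_apply]
  have hcoe : ((0 : G n ℓ) : Fin n → ZMod ℓ) = 0 := rfl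
  rw [hcoe, coc_zero_left, chi_zero_left, zero_add]
  simp

/-- total degree of a basis index -/
def degm (m : M n ℓ) : ℤ := ∑ j, m.1 j

/-- degree filtration on the crossed product's underlying space -/
def F (n ℓ : ℕ) [NeZero n] (d : ℤ) : Submodule ℂ (M n ℓ →₀ ℂ) :=
  Finsupp.supported ℂ ℂ {m | degm m ≤ d}

lemma F_mono {d d' : ℤ} (h : d ≤ d') : F n ℓ d ≤ F n ℓ d' :=
  Finsupp.supported_mono (fun m hm => le_trans hm h)

lemma single_mem_F {m : M n ℓ} {d : ℤ} (h : degm m ≤ d) (c : ℂ) :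
    Finsupp.single m c ∈ F n ℓ d :=
  Finsupp.single_mem_supported ℂ c h

lemma F_apply_eq_zero {v : M n ℓ →₀ ℂ} {d : ℤ} (hv : v ∈ F n ℓ d) {m : M n ℓ}
    (hm : d < degm m) : v m = 0 :=
  (Finsupp.mem_supported' ℂ v).mp hv m (by simp only [Set.mem_setOf_eq]; omega)

lemma degm_add (a b : M n ℓ) : degm (a + b) = (∑ j, a.1 j) + degm b := by
  simp [degm, Finset.sum_add_distrib]

lemma Top_F (a : M n ℓ) {d : ℤ} {v : M n ℓ →₀ ℂ} (hv : v ∈ F n ℓ d) :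
    Top n ℓ ζ a v ∈ F n ℓ (d + ∑ j, a.1 j) := by
  rw [F, Finsupp.supported_eq_span_single] at hv
  induction hv using Submodule.span_induction with
  | mem z hzm =>
    obtain ⟨m, hm, rfl⟩ := hzm
    rw [Top_single]
    refine single_mem_F ?_ _
    rw [degm_add]
    simp only [Set.mem_setOf_eq] at hm
    omega
  | zero => rw [map_zero]; exact zero_mem _
  | add x y _ _ hx hy => rw [map_add]; exact add_mem hx hy
  | smul c x _ hx => rw [map_smul]; exact Submodule.smul_mem _ _ hx

lemma sum_pi_single_one (i : Fin n) : (∑ j, (Pi.single i 1 : Fin n → ℤ) j) = 1 := by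
  simp [Pi.single_apply]

lemma Uy_F (g : G n ℓ) {d : ℤ} {v : M n ℓ →₀ ℂ} (hv : v ∈ F n ℓ d) :
    Uy n ℓ ζ g v ∈ F n ℓ d := by
  have := Top_F (ζ := ζ) ((0, g) : M n ℓ) hv
  simpa [Uy] using this

lemma Ygen_F (i : Fin n) {d : ℤ} {v : M n ℓ →₀ ℂ} (hv : v ∈ F n ℓ d) :
    Ygen n ℓ ζ i v ∈ F n ℓ (d + 1) := by
  have := Top_F (ζ := ζ) ((Pi.single i 1, 0) : M n ℓ) hv
  simpa [Ygen, sum_pi_single_one] using this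

lemma Yinv_F (i : Fin n) {d : ℤ} {v : M n ℓ →₀ ℂ} (hv : v ∈ F n ℓ d) :
    Yinv n ℓ ζ i v ∈ F n ℓ (d - 1) := by
  have := Top_F (ζ := ζ) ((-Pi.single i 1, 0) : M n ℓ) hv
  have hs : (∑ j, ((-Pi.single i 1 : Fin n → ℤ), (0 : G n ℓ)).1 j) = -1 := by
    simp [Pi.single_apply]
  rw [hs] at this
  simpa [Yinv, sub_eq_add_neg] using this

end Aux3
end TGHA
namespace TGHA
section Aux4

variable {n ℓ : ℕ} [NeZero n] [NeZero ℓ] {ζ : ℂ} {t : Fin n → ℂ}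

open Fin.NatCast in
lemma G_gen (g : G n ℓ) : g ∈ AddSubmonoid.closure (Set.range (gelt n ℓ)) := by
  obtain ⟨m, hm⟩ := Nat.exists_eq_succ_of_ne_zero (NeZero.ne n)
  subst hm
  set s : Fin (m + 1) → ZMod ℓ :=
    fun k => ∑ p ∈ Finset.range (k.1 + 1), g.1 (p : Fin (m + 1)) with hs
  have hzero : s (0 - 1) = 0 := by
    have hv : ((0 - 1 : Fin (m + 1))).1 = m := by
      rw [Fin.coe_sub_one]
      simp
    simp only [hs, hv]
    have : ∑ p ∈ Finset.range (m + 1), g.1 (p : Fin (m + 1))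
        = ∑ i : Fin (m + 1), g.1 (((i : ℕ) : Fin (m + 1))) := by
      rw [Fin.sum_univ_eq_sum_range (fun p => g.1 (p : Fin (m + 1))) (m + 1)]
    rw [this]
    simp only [Fin.cast_val_eq_self]
    exact g.2
  have hstep : ∀ j : Fin (m + 1), s j - s (j - 1) = g.1 j := by
    intro j
    by_cases hj : j = 0
    · subst hj
      rw [hzero, sub_zero]
      simp [hs]
    · have hv : ((j - 1 : Fin (m + 1))).1 = j.1 - 1 := by
        rw [Fin.coe_sub_one, if_neg hj]
      have hj1 : 1 ≤ j.1 := by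
        rcases Nat.eq_zero_or_pos j.1 with h0 | h1
        · exact absurd (Fin.ext h0) hj
        · exact h1
      simp only [hs, hv]
      rw [Nat.sub_add_cancel hj1, Finset.sum_range_succ]
      simp [Fin.cast_val_eq_self]
  have claim : g = ∑ k : Fin (m + 1), (s k).val • gelt (m + 1) ℓ k := by
    apply Subtype.ext
    have hcoe : ((∑ k : Fin (m + 1), (s k).val • gelt (m + 1) ℓ k : G (m + 1) ℓ)
          : Fin (m + 1) → ZMod ℓ)
        = ∑ k : Fin (m + 1), (s k).val • gvec (m + 1) ℓ k := by
      rw [AddSubmonoidClass.coe_finset_sum]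
      exact Finset.sum_congr rfl fun k _ => rfl
    rw [hcoe]
    funext j
    rw [Finset.sum_apply]
    have hterm : ∀ k : Fin (m + 1), ((s k).val • gvec (m + 1) ℓ k) j
        = (if k = j then s k else 0) - (if k = j - 1 then s k else 0) := by
      intro k
      have hsm : ((s k).val • gvec (m + 1) ℓ k) j = s k * gvec (m + 1) ℓ k j := by
        rw [Pi.smul_apply, nsmul_eq_mul, ZMod.natCast_val, ZMod.cast_id]
      rw [hsm, gvec]
      have hh : ((Pi.single k 1 - Pi.single (k + 1) 1 : Fin (m + 1) → ZMod ℓ)) j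
          = (if j = k then (1 : ZMod ℓ) else 0) - (if j = k + 1 then 1 else 0) := by
        simp [Pi.single_apply]
      rw [hh, mul_sub, mul_ite, mul_one, mul_zero, mul_ite, mul_one, mul_zero]
      congr 1
      · simp [eq_comm]
      · simp only [show (j = k + 1) ↔ (k = j - 1) from
          Iff.intro (fun h => by subst h; simp) (fun h => by subst h; simp)]
    rw [Finset.sum_congr rfl (fun k _ => hterm k), Finset.sum_sub_distrib,
      Finset.sum_ite_eq' Finset.univ j s, Finset.sum_ite_eq' Finset.univ (j - 1) s]
    simp only [Finset.mem_univ, if_true]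
    exact (hstep j).symm
  rw [claim]
  refine AddSubmonoid.sum_mem _ fun k _ => AddSubmonoid.nsmul_mem _ ?_ _
  exact AddSubmonoid.subset_closure (Set.mem_range_self k)

end Aux4
end TGHA
namespace TGHA
section Aux5

variable {n ℓ : ℕ} [NeZero n] [NeZero ℓ] {ζ : ℂ} {t : Fin n → ℂ}
variable {Θ : H n ℓ ζ t →ₐ[ℂ] A n ℓ}

lemma Ug' (hz : ζ ^ ℓ = 1) (hζ0 : ζ ≠ 0)
    (hΘg : ∀ i : Fin n, Θ (ug n ℓ ζ t (gelt n ℓ i)) = Uy n ℓ ζ (gelt n ℓ i))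
    (g : G n ℓ) :
    ∃ c : ℂ, c ≠ 0 ∧ Θ (ug n ℓ ζ t g) = c • Uy n ℓ ζ g := by
  have hg := G_gen g
  induction hg using AddSubmonoid.closure_induction with
  | mem x hx =>
    obtain ⟨i, rfl⟩ := hx
    exact ⟨1, one_ne_zero, by rw [hΘg i, one_smul]⟩
  | zero =>
    refine ⟨1, one_ne_zero, ?_⟩
    rw [h_one, map_one, Uy_zero, one_smul]
  | add x y hx hy ihx ihy =>
    obtain ⟨c₁, hc₁, e₁⟩ := ihx
    obtain ⟨c₂, hc₂, e₂⟩ := ihy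
    refine ⟨c₁ * c₂, mul_ne_zero hc₁ hc₂, ?_⟩
    have hco : coc n ℓ ζ x.1 y.1 ≠ 0 := zp_ne_zero hζ0 _
    have hgg := h_grp (ζ := ζ) (t := t) x y
    have hTh : coc n ℓ ζ x.1 y.1 • Θ (ug n ℓ ζ t (x + y))
        = coc n ℓ ζ x.1 y.1 • ((c₁ * c₂) • Uy n ℓ ζ (x + y)) := by
      rw [← map_smul, ← hgg, map_mul, e₁, e₂, smul_mul_smul_comm, Uy_mul hz,
        smul_smul, smul_smul, mul_comm]
    exact smul_right_injective _ hco hTh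

lemma theta_x_single (hΘx : ∀ i : Fin n,
      Θ (xx n ℓ ζ t i) = Ygen n ℓ ζ i -
        (ζ * t i / (ζ - 1)) • (Yinv n ℓ ζ (i + 1) * Uy n ℓ ζ (gelt n ℓ i)))
    (i : Fin n) (q : Fin n → ℤ) (h : G n ℓ) :
    ∃ e ∈ F n ℓ ((∑ j, q j) - 1),
      Θ (xx n ℓ ζ t i) (Finsupp.single ((q, h) : M n ℓ) 1)
        = Finsupp.single ((Pi.single i 1 + q, h) : M n ℓ) 1 + e := by
  refine ⟨-((ζ * t i / (ζ - 1)) • Finsupp.single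
      ((-Pi.single (i + 1) 1 + q, gelt n ℓ i + h) : M n ℓ)
      ((coc n ℓ ζ (gelt n ℓ i).1 h.1 * chi n ℓ ζ (gelt n ℓ i).1 q) * 1)), ?_, ?_⟩
  · refine neg_mem (Submodule.smul_mem _ _ (single_mem_F ?_ _))
    have : degm ((-Pi.single (i + 1) 1 + q, gelt n ℓ i + h) : M n ℓ)
        = -1 + ∑ j, q j := by
      simp [degm, Finset.sum_add_distrib, Pi.single_apply]
    rw [this]
    omega
  · rw [hΘx i, LinearMap.sub_apply, LinearMap.smul_apply, Module.End.mul_apply,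
      Ygen_single, Uy_single, Yinv_single, sub_eq_add_neg]

lemma theta_x_F (hΘx : ∀ i : Fin n,
      Θ (xx n ℓ ζ t i) = Ygen n ℓ ζ i -
        (ζ * t i / (ζ - 1)) • (Yinv n ℓ ζ (i + 1) * Uy n ℓ ζ (gelt n ℓ i)))
    (i : Fin n) {d : ℤ} {v : M n ℓ →₀ ℂ} (hv : v ∈ F n ℓ d) :
    Θ (xx n ℓ ζ t i) v ∈ F n ℓ (d + 1) := by
  rw [hΘx i, LinearMap.sub_apply, LinearMap.smul_apply, Module.End.mul_apply]
  refine sub_mem (Ygen_F i hv) (Submodule.smul_mem _ _ (F_mono ?_ (Yinv_F _ (Uy_F _ hv))))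
  omega

/-- count vector of a word, as an integer vector -/
def cnt (n : ℕ) [NeZero n] (l : List (Fin n)) : Fin n → ℤ := fun j => (l.count j : ℤ)

lemma cnt_nil : cnt n ([] : List (Fin n)) = 0 := by
  funext j; simp [cnt]

lemma cnt_cons (i : Fin n) (l : List (Fin n)) :
    cnt n (i :: l) = Pi.single i 1 + cnt n l := by
  funext j
  simp only [cnt, List.count_cons, Pi.add_apply, Pi.single_apply]
  push_cast
  by_cases h : j = i
  · subst h; simp; omega
  · simp [h, Ne.symm h]

lemma cnt_sum (l : List (Fin n)) : (∑ j, cnt n l j) = l.length := by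
  induction l with
  | nil => simp [cnt]
  | cons i l ih =>
    rw [cnt_cons]
    simp only [Pi.add_apply]
    rw [Finset.sum_add_distrib, ih, sum_pi_single_one]
    push_cast [List.length_cons]
    ring

lemma cnt_inj {v v' : List (Fin n)} (hv : List.Pairwise (· ≤ ·) v)
    (hv' : List.Pairwise (· ≤ ·) v') (h : cnt n v = cnt n v') : v = v' := by
  refine List.Perm.eq_of_pairwise' hv hv' (List.perm_iff_count.mpr fun a => ?_)
  have := congrFun h a
  simpa [cnt] using this

end Aux5
end TGHA
namespace TGHA
section Aux6

variable {n ℓ : ℕ} [NeZero n] [NeZero ℓ] {ζ : ℂ} {t : Fin n → ℂ}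
variable {Θ : H n ℓ ζ t →ₐ[ℂ] A n ℓ}

lemma LT (hΘx : ∀ i : Fin n,
      Θ (xx n ℓ ζ t i) = Ygen n ℓ ζ i -
        (ζ * t i / (ζ - 1)) • (Yinv n ℓ ζ (i + 1) * Uy n ℓ ζ (gelt n ℓ i)))
    (l : List (Fin n)) (g : G n ℓ) :
    ∃ e ∈ F n ℓ ((l.length : ℤ) - 1),
      Θ (wp n ℓ ζ t l) (Finsupp.single (((0 : Fin n → ℤ), g) : M n ℓ) 1)
        = Finsupp.single ((cnt n l, g) : M n ℓ) 1 + e := by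
  induction l with
  | nil =>
    refine ⟨0, zero_mem _, ?_⟩
    rw [wp_nil, map_one, Module.End.one_apply, cnt_nil, add_zero]
  | cons i l ih =>
    obtain ⟨e, he, heq⟩ := ih
    obtain ⟨e', he', heq'⟩ := theta_x_single hΘx i (cnt n l) g
    refine ⟨e' + Θ (xx n ℓ ζ t i) e, ?_, ?_⟩
    · refine add_mem (F_mono ?_ he') (F_mono ?_ (theta_x_F hΘx i he))
      · rw [cnt_sum]
        push_cast [List.length_cons]
        omega
      · push_cast [List.length_cons]
        omega
    · rw [wp_cons, map_mul, Module.End.mul_apply, heq, map_add, heq', cnt_cons,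
        ← add_assoc]

lemma LTz (hz : ζ ^ ℓ = 1) (hζ0 : ζ ≠ 0)
    (hΘg : ∀ i : Fin n, Θ (ug n ℓ ζ t (gelt n ℓ i)) = Uy n ℓ ζ (gelt n ℓ i))
    (hΘx : ∀ i : Fin n,
      Θ (xx n ℓ ζ t i) = Ygen n ℓ ζ i -
        (ζ * t i / (ζ - 1)) • (Yinv n ℓ ζ (i + 1) * Uy n ℓ ζ (gelt n ℓ i)))
    (l : List (Fin n)) (g : G n ℓ) :
    ∃ c : ℂ, c ≠ 0 ∧ ∃ e ∈ F n ℓ ((l.length : ℤ) - 1),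
      Θ (wp n ℓ ζ t l * ug n ℓ ζ t g)
          (Finsupp.single (((0 : Fin n → ℤ), (0 : G n ℓ)) : M n ℓ) 1)
        = c • (Finsupp.single ((cnt n l, g) : M n ℓ) 1 + e) := by
  obtain ⟨c, hc0, hcu⟩ := Ug' hz hζ0 hΘg g
  obtain ⟨e, he, heq⟩ := LT hΘx l g
  refine ⟨c, hc0, e, he, ?_⟩
  rw [map_mul, Module.End.mul_apply, hcu, LinearMap.smul_apply, Uy_single, map_smul,
    ← heq]
  congr 2
  have hcoe : ((0 : G n ℓ) : Fin n → ZMod ℓ) = 0 := rfl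
  rw [hcoe, coc_zero_right, chi_zero_right]
  simp

end Aux6
end TGHA
open TGHA in
/-- The algebra homomorphism `Θ : H → ℂ[y₁^±,…,y_n^±] #_α G` determined by
`Θ(x_i) = y_i - (ζ t_i/(ζ-1)) y_{i+1}⁻¹ g_i` and `Θ(g_i) = g_i` for all `i` is injective. -/
theorem statement1 (n ℓ : ℕ) [NeZero n] (hn : 3 ≤ n) (hℓ : 2 ≤ ℓ)
    (ζ : ℂ) (hζ : IsPrimitiveRoot ζ ℓ) (t : Fin n → ℂ)
    (Θ : H n ℓ ζ t →ₐ[ℂ] A n ℓ)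
    (hΘx : ∀ i : Fin n,
      Θ (xx n ℓ ζ t i) =
        Ygen n ℓ ζ i -
          (ζ * t i / (ζ - 1)) • (Yinv n ℓ ζ (i + 1) * Uy n ℓ ζ (gelt n ℓ i)))
    (hΘg : ∀ i : Fin n, Θ (ug n ℓ ζ t (gelt n ℓ i)) = Uy n ℓ ζ (gelt n ℓ i)) :
    Function.Injective Θ := by
  classical
  have : NeZero ℓ := ⟨by omega⟩
  have hz : ζ ^ ℓ = 1 := hζ.pow_eq_one
  have hζ0 : ζ ≠ 0 := hζ.ne_zero (by omega)
  rw [injective_iff_map_eq_zero]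
  intro h hh0
  have hmem : h ∈ Bspan n ℓ ζ t := by rw [Bspan_top]; trivial
  rw [Bspan] at hmem
  obtain ⟨cf, hsupp, hsum⟩ := Submodule.mem_span_set.mp hmem
  -- choice of sorted word and group element for each spanning element
  let P : H n ℓ ζ t → Prop := fun z =>
    ∃ v g, List.Pairwise (· ≤ ·) v ∧ z = wp n ℓ ζ t v * ug n ℓ ζ t g
  let wv : H n ℓ ζ t → List (Fin n) := fun z =>
    if hzB : P z then hzB.choose else []
  let gv : H n ℓ ζ t → G n ℓ := fun z =>
    if hzB : P z then hzB.choose_spec.choose else 0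
  have hwg : ∀ z, P z → List.Pairwise (· ≤ ·) (wv z) ∧
      z = wp n ℓ ζ t (wv z) * ug n ℓ ζ t (gv z) := by
    intro z hzB
    simp only [wv, gv, dif_pos hzB]
    exact ⟨hzB.choose_spec.choose_spec.1, hzB.choose_spec.choose_spec.2⟩
  by_contra hne
  have hcfne : cf ≠ 0 := by
    rintro rfl
    apply hne
    rw [← hsum]
    simp
  have hPsupp : ∀ z ∈ cf.support, P z := fun z hzs => hsupp hzs
  obtain ⟨z₀, hz₀s, hmax⟩ := Finset.exists_max_image cf.support
    (fun z => (wv z).length) (Finsupp.support_nonempty_iff.mpr hcfne)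
  set δ₀ : M n ℓ →₀ ℂ := Finsupp.single (((0 : Fin n → ℤ), (0 : G n ℓ)) : M n ℓ) 1 with hδ₀
  set m₀ : M n ℓ := ((cnt n (wv z₀), gv z₀) : M n ℓ) with hm₀
  have h0 : (0 : M n ℓ →₀ ℂ) = ∑ z ∈ cf.support, cf z • (Θ z δ₀) := by
    have h1 : Θ h δ₀ = 0 := by rw [hh0]; rfl
    rw [← hsum] at h1
    rw [← h1, Finsupp.sum, map_sum]
    rw [LinearMap.sum_apply]
    refine Finset.sum_congr rfl fun z hzs => ?_
    rw [map_smul, LinearMap.smul_apply]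
  have h0m := congrArg (fun v : M n ℓ →₀ ℂ => v m₀) h0
  simp only [Finsupp.coe_zero, Pi.zero_apply, Finsupp.finset_sum_apply,
    Finsupp.smul_apply] at h0m
  -- degree of m₀
  have hdeg₀ : degm m₀ = ((wv z₀).length : ℤ) := by
    rw [hm₀]
    exact cnt_sum (wv z₀)
  -- per-element data
  have hterm : ∀ z ∈ cf.support, ∃ c : ℂ, c ≠ 0 ∧
      (Θ z δ₀) m₀ = c * (if ((cnt n (wv z), gv z) : M n ℓ) = m₀ then 1 else 0) := by
    intro z hzs
    obtain ⟨hsort, hzeq⟩ := hwg z (hPsupp z hzs)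
    obtain ⟨c, hc0, e, he, heq⟩ := LTz hz hζ0 hΘg hΘx (wv z) (gv z)
    refine ⟨c, hc0, ?_⟩
    conv_lhs => rw [hzeq, hδ₀, heq]
    rw [Finsupp.smul_apply, Finsupp.add_apply]
    have hez : e m₀ = 0 := by
      refine F_apply_eq_zero he ?_
      rw [hdeg₀]
      have := hmax z hzs
      omega
    rw [hez, add_zero, Finsupp.single_apply, smul_eq_mul]
  -- the sum reduces to the z₀ term
  obtain ⟨c₀, hc₀0, hterm₀⟩ := hterm z₀ hz₀s
  have hsum0 : ∑ z ∈ cf.support, cf z • (Θ z δ₀) m₀ = cf z₀ * c₀ := by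
    rw [Finset.sum_eq_single_of_mem z₀ hz₀s]
    · rw [hterm₀, if_pos rfl, mul_one, smul_eq_mul]
    · intro z hzs hzne
      obtain ⟨c, hc0, hceq⟩ := hterm z hzs
      rw [hceq]
      have hiz : ¬ (((cnt n (wv z), gv z) : M n ℓ) = m₀) := by
        intro hiz
        apply hzne
        rw [hm₀, Prod.mk.injEq] at hiz
        have hw : wv z = wv z₀ := cnt_inj (hwg z (hPsupp z hzs)).1
          (hwg z₀ (hPsupp z₀ hz₀s)).1 hiz.1
        have := (hwg z (hPsupp z hzs)).2
        rw [hw, hiz.2, ← (hwg z₀ (hPsupp z₀ hz₀s)).2] at this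
        exact this
      rw [if_neg hiz, mul_zero, smul_eq_mul, mul_zero]
  rw [hsum0] at h0m
  have hcz₀ : cf z₀ = 0 := by
    rcases mul_eq_zero.mp h0m.symm with h' | h'
    · exact h'
    · exact absurd h' hc₀0
  exact (Finsupp.mem_support_iff.mp hz₀s) hcz₀
end
end

section
/- In the Laurent polynomial ring ℂ[y₁^±,…,y_n^±], setting ã_i = y_i^ℓ − τ̃_i y_{i+1}^{−ℓ} for i = 1,…,n (subscripts mod n), one has Σ_{{i₁<⋯<i_k}∈J} τ̃_{i₁}⋯τ̃_{i_k} ã^{δ−ε_{i₁}−⋯−ε_{i_k}} = (y₁⋯y_n)^ℓ + (−1)^{nℓ} (τ₁⋯τ_n)^ℓ (y₁⋯y_n)^{−ℓ}. -/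
/-!
Common setup for the twisted graded Hecke algebra associated to the homocyclic
group `G ≅ (ℤ/ℓℤ)^{n-1}` (Gan–Highfield, "Center of twisted graded Hecke
algebras for homocyclic groups").

All indices are 0-based: the paper's `x_i, g_i, t_i, τ_i` (for `i = 1, …, n`)
correspond to index `i - 1 : Fin n` here; subscripts are taken mod `n` via the
(wrap-around) addition of `Fin n`.
-/

noncomputable section

namespace TGHA

/-- The Laurent monomial `y_i` in the Laurent polynomial ring `ℂ[y₁^±,…,y_n^±]`. -/
def yL (n : ℕ) (i : Fin n) : AddMonoidAlgebra ℂ (Fin n → ℤ) :=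
  AddMonoidAlgebra.single (Pi.single i 1) 1

/-- The Laurent monomial `y_i⁻¹` in `ℂ[y₁^±,…,y_n^±]`. -/
def yLinv (n : ℕ) (i : Fin n) : AddMonoidAlgebra ℂ (Fin n → ℤ) :=
  AddMonoidAlgebra.single (-Pi.single i 1) 1

/-- `ã_i = y_i^ℓ - τ̃_i y_{i+1}^{-ℓ}` (subscripts mod `n`). -/
def atilde (n ℓ : ℕ) [NeZero n] (ζ : ℂ) (t : Fin n → ℂ) (i : Fin n) :
    AddMonoidAlgebra ℂ (Fin n → ℤ) :=
  yL n i ^ ℓ - taut n ℓ ζ t i • yLinv n (i + 1) ^ ℓ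

end TGHA

namespace TGHA

open Finset

variable (n ℓ : ℕ) [NeZero n] (ζ : ℂ) (t : Fin n → ℂ)

/-- The scalar `c` as an element of `ℂ[y₁^±,…,y_n^±]`. -/
noncomputable def sing0 (c : ℂ) : AddMonoidAlgebra ℂ (Fin n → ℤ) :=
  AddMonoidAlgebra.single 0 c

lemma smul_eq_sing0_mul (c : ℂ) (x : AddMonoidAlgebra ℂ (Fin n → ℤ)) :
    c • x = sing0 n c * x := by
  rw [Algebra.smul_def, sing0, AddMonoidAlgebra.coe_algebraMap]; simp

lemma sing0_mul_sing0 (c d : ℂ) : sing0 n c * sing0 n d = sing0 n (c * d) := by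
  rw [sing0, sing0, sing0, AddMonoidAlgebra.single_mul_single, zero_add]

lemma sing0_one : sing0 n 1 = 1 := rfl

lemma sing0_prod {ι : Type*} (s : Finset ι) (f : ι → ℂ) :
    sing0 n (∏ i ∈ s, f i) = ∏ i ∈ s, sing0 n (f i) := by
  classical
  induction s using Finset.cons_induction with
  | empty => simp [sing0_one]
  | cons a s ha ih => rw [prod_cons, prod_cons, ← ih, sing0_mul_sing0]

/-- `a_j = y_j^ℓ`. -/
noncomputable def aa (j : Fin n) : AddMonoidAlgebra ℂ (Fin n → ℤ) := yL n j ^ ℓ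

/-- `b_j = τ̃_j y_{j+1}^{-ℓ}`. -/
noncomputable def bb (j : Fin n) : AddMonoidAlgebra ℂ (Fin n → ℤ) :=
  sing0 n (taut n ℓ ζ t j) * yLinv n (j + 1) ^ ℓ

lemma yLinv_pow_mul_yL_pow (j : Fin n) : yLinv n j ^ ℓ * yL n j ^ ℓ = 1 := by
  rw [yL, yLinv, AddMonoidAlgebra.single_pow, AddMonoidAlgebra.single_pow,
      AddMonoidAlgebra.single_mul_single]
  simp [AddMonoidAlgebra.one_def]

lemma bb_mul_aa (i : Fin n) :
    bb n ℓ ζ t i * aa n ℓ (i + 1) = sing0 n (taut n ℓ ζ t i) := by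
  rw [bb, aa, mul_assoc, yLinv_pow_mul_yL_pow, mul_one]

lemma atilde_eq (j : Fin n) :
    atilde n ℓ ζ t j = -(bb n ℓ ζ t j) + aa n ℓ j := by
  rw [atilde, smul_eq_sing0_mul, bb, aa]; ring

/-- Positions not covered by `S` (the support of `ã^{δ-Σ_{i∈S}ε_i}`). -/
noncomputable def cset (S : Finset (Fin n)) : Finset (Fin n) :=
  univ.filter fun j => ¬(j ∈ S ∨ j - 1 ∈ S)

/-- Elements of `U` whose successor is not in `U`. -/
noncomputable def dset (U : Finset (Fin n)) : Finset (Fin n) :=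
  U.filter fun i => i + 1 ∉ U

lemma mem_cset {S : Finset (Fin n)} {j : Fin n} :
    j ∈ cset n S ↔ j ∉ S ∧ j - 1 ∉ S := by
  simp [cset, not_or]

lemma mem_dset {U : Finset (Fin n)} {i : Fin n} :
    i ∈ dset n U ↔ i ∈ U ∧ i + 1 ∉ U := by
  simp [dset]

lemma mem_Jset {S : Finset (Fin n)} :
    S ∈ Jset n ↔ ∀ i ∈ S, ∀ j ∈ S, j ≠ i + 1 := by
  simp [Jset]

lemma prod_atilde_expS (S : Finset (Fin n)) :
    (∏ j : Fin n, atilde n ℓ ζ t j ^ expS n S j) =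
      ∏ j ∈ cset n S, atilde n ℓ ζ t j := by
  rw [cset, prod_filter]
  refine prod_congr rfl fun j _ => ?_
  by_cases h : j ∈ S ∨ j - 1 ∈ S <;> simp [expS, h]

lemma subset_dset_union {S T : Finset (Fin n)} (hS : S ∈ Jset n) (hT : T ⊆ cset n S) :
    S ⊆ dset n (S ∪ T) := by
  intro i hi
  rw [mem_dset]
  refine ⟨mem_union_left _ hi, ?_⟩
  rw [mem_union]
  rintro (h | h)
  · exact (mem_Jset n).mp hS i hi (i + 1) h rfl
  · have := (mem_cset n).mp (hT h)
    rw [add_sub_cancel_right] at this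
    exact this.2 hi

lemma of_subset_dset {U S : Finset (Fin n)} (hS : S ⊆ dset n U) :
    S ∈ Jset n ∧ U \ S ⊆ cset n S := by
  constructor
  · rw [mem_Jset]
    intro i hi j hj hji
    have h1 := (mem_dset n).mp (hS hi)
    have h2 := (mem_dset n).mp (hS hj)
    exact h1.2 (hji ▸ h2.1)
  · intro j hj
    rw [mem_sdiff] at hj
    rw [mem_cset]
    refine ⟨hj.2, fun h => ?_⟩
    have := (mem_dset n).mp (hS h)
    rw [sub_add_cancel] at this
    exact this.2 hj.1

lemma dset_subset {U : Finset (Fin n)} : dset n U ⊆ U := filter_subset _ _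

/-- Partition of `univ \ U` used in the telescoping step. -/
lemma sdiff_eq_union {U S : Finset (Fin n)} (hS : S ⊆ dset n U) :
    univ \ U = (cset n S \ (U \ S)) ∪ S.image (· + 1) := by
  ext j
  simp only [mem_sdiff, mem_univ, true_and, mem_union, mem_image]
  constructor
  · intro hj
    by_cases h : j - 1 ∈ S
    · exact Or.inr ⟨j - 1, h, by rw [sub_add_cancel]⟩
    · refine Or.inl ⟨(mem_cset n).mpr ⟨fun hjS => hj (dset_subset n (hS hjS)), h⟩,
        fun hc => hj hc.1⟩
  · rintro (h | ⟨i, hi, rfl⟩)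
    · intro hjU
      exact h.2 ⟨hjU, ((mem_cset n).mp h.1).1⟩
    · exact ((mem_dset n).mp (hS hi)).2

lemma disj_aux {U S : Finset (Fin n)} (hS : S ⊆ dset n U) :
    Disjoint (cset n S \ (U \ S)) (S.image (· + 1)) := by
  rw [disjoint_right]
  intro j hj hj'
  obtain ⟨i, hi, rfl⟩ := mem_image.mp hj
  have := (mem_cset n).mp (mem_sdiff.mp hj').1
  rw [add_sub_cancel_right] at this
  exact this.2 hi

/-- The main telescoping identity for a single term. -/
lemma term_eq {U S : Finset (Fin n)} (hS : S ⊆ dset n U) :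
    (∏ i ∈ S, sing0 n (taut n ℓ ζ t i)) *
      ((∏ j ∈ U \ S, -(bb n ℓ ζ t j)) * ∏ j ∈ cset n S \ (U \ S), aa n ℓ j) =
    (-1) ^ (U \ S).card *
      ((∏ j ∈ U, bb n ℓ ζ t j) * ∏ j ∈ univ \ U, aa n ℓ j) := by
  have hSU : S ⊆ U := hS.trans (dset_subset n)
  have h1 : (∏ j ∈ U \ S, -(bb n ℓ ζ t j)) =
      (-1) ^ (U \ S).card * ∏ j ∈ U \ S, bb n ℓ ζ t j := by
    rw [← prod_const, ← prod_mul_distrib]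
    exact prod_congr rfl fun _ _ => (neg_one_mul _).symm
  have h2 : (∏ j ∈ U, bb n ℓ ζ t j) =
      (∏ j ∈ U \ S, bb n ℓ ζ t j) * ∏ j ∈ S, bb n ℓ ζ t j :=
    (prod_sdiff hSU).symm
  have h3 : (∏ j ∈ univ \ U, aa n ℓ j) =
      (∏ j ∈ cset n S \ (U \ S), aa n ℓ j) * ∏ i ∈ S, aa n ℓ (i + 1) := by
    rw [sdiff_eq_union n hS, prod_union (disj_aux n hS), prod_image]
    intro a _ b _ h
    exact add_right_cancel h
  have h4 : (∏ j ∈ S, bb n ℓ ζ t j) * ∏ i ∈ S, aa n ℓ (i + 1) =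
      ∏ i ∈ S, sing0 n (taut n ℓ ζ t i) := by
    rw [← prod_mul_distrib]
    exact prod_congr rfl fun i _ => bb_mul_aa n ℓ ζ t i
  rw [h1, h2, h3, ← h4]
  ring

open Fin.NatCast in
lemma dset_eq_empty_iff {U : Finset (Fin n)} :
    dset n U = ∅ ↔ U = ∅ ∨ U = univ := by
  constructor
  · intro h
    rcases U.eq_empty_or_nonempty with h0 | ⟨i0, hi0⟩
    · exact Or.inl h0
    · refine Or.inr (eq_univ_iff_forall.mpr fun j => ?_)
      have hstep : ∀ i ∈ U, i + 1 ∈ U := by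
        intro i hi
        by_contra hi1
        exact absurd (h ▸ (mem_dset n).mpr ⟨hi, hi1⟩) (notMem_empty i)
      have hk : ∀ k : ℕ, i0 + (k : Fin n) ∈ U := by
        intro k
        induction k with
        | zero => simpa using hi0
        | succ m ih =>
          have : ((m + 1 : ℕ) : Fin n) = (m : Fin n) + 1 := by push_cast; ring
          rw [this, ← add_assoc]
          exact hstep _ ih
      have := hk (j - i0).val
      rwa [Fin.cast_val_eq_self, add_sub_cancel] at this
  · rintro (rfl | rfl)
    · simp [dset]
    · simp [dset]

lemma prod_taut :
    (∏ i : Fin n, taut n ℓ ζ t i) =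
      (-1 : ℂ) ^ (n * (ℓ - 1)) * (∏ i : Fin n, tau n ζ t i) ^ ℓ := by
  have hn0 : 0 < n := Nat.pos_of_ne_zero (NeZero.ne n)
  have key : ∀ i : Fin n, taut n ℓ ζ t i =
      (if i = (⟨n - 1, Nat.sub_lt hn0 one_pos⟩ : Fin n) then (-1 : ℂ) ^ (n * (ℓ - 1)) else 1) *
        tau n ζ t i ^ ℓ := by
    intro i
    by_cases h : (i : ℕ) = n - 1
    · rw [taut, if_pos h, if_pos (Fin.ext h)]
    · rw [taut, if_neg h, if_neg fun hc => h (by rw [hc]), one_mul]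
  rw [Finset.prod_congr rfl fun i _ => key i, prod_mul_distrib, prod_pow,
    Finset.prod_ite_eq' univ _ (fun _ => (-1 : ℂ) ^ (n * (ℓ - 1)))]
  simp

end TGHA

namespace TGHA

open Finset

variable (n ℓ : ℕ) [NeZero n] (ζ : ℂ) (t : Fin n → ℂ)

lemma sing0_pow (c : ℂ) (k : ℕ) : sing0 n c ^ k = sing0 n (c ^ k) := by
  induction k with
  | zero => simp [sing0_one]
  | succ m ih => rw [pow_succ, pow_succ, ih, sing0_mul_sing0]

lemma sing0_neg_one : sing0 n (-1) = -1 := by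
  have h : (-1 : ℂ) • (1 : AddMonoidAlgebra ℂ (Fin n → ℤ)) = -1 := by simp
  rw [← h, smul_eq_sing0_mul, mul_one]

lemma disjoint_of_subset_cset {S T : Finset (Fin n)} (hT : T ⊆ cset n S) :
    Disjoint S T := by
  rw [disjoint_right]
  exact fun {j} hj hjS => ((mem_cset n).mp (hT hj)).1 hjS

lemma sign_sum (U : Finset (Fin n)) :
    (∑ S ∈ (dset n U).powerset, (-1 : AddMonoidAlgebra ℂ (Fin n → ℤ)) ^ (U \ S).card) =
      (if dset n U = ∅ then 1 else 0) * (-1) ^ U.card := by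
  have h1 : ∀ S ∈ (dset n U).powerset,
      ((-1 : AddMonoidAlgebra ℂ (Fin n → ℤ))) ^ (U \ S).card =
        (-1) ^ U.card * (-1) ^ S.card := by
    intro S hS
    have hSU : S ⊆ U := (mem_powerset.mp hS).trans (dset_subset n)
    have hc : (U \ S).card + S.card = U.card := card_sdiff_add_card_eq_card hSU
    rw [← hc, pow_add, mul_assoc, ← pow_add, ← two_mul, pow_mul, neg_one_sq, one_pow, mul_one]
  rw [sum_congr rfl h1, ← mul_sum, mul_comm]
  congr 1
  have hcast : (∑ S ∈ (dset n U).powerset, (-1 : AddMonoidAlgebra ℂ (Fin n → ℤ)) ^ S.card) =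
      (((∑ S ∈ (dset n U).powerset, (-1 : ℤ) ^ S.card : ℤ)) :
        AddMonoidAlgebra ℂ (Fin n → ℤ)) := by
    push_cast
    rfl
  rw [hcast, Finset.sum_powerset_neg_one_pow_card]
  split_ifs <;> simp

lemma prod_bb :
    (∏ j : Fin n, bb n ℓ ζ t j) =
      sing0 n ((-1 : ℂ) ^ (n * (ℓ - 1)) * (∏ i : Fin n, tau n ζ t i) ^ ℓ) *
        (∏ j : Fin n, yLinv n j) ^ ℓ := by
  calc (∏ j : Fin n, bb n ℓ ζ t j)
      = (∏ j : Fin n, sing0 n (taut n ℓ ζ t j)) * ∏ j : Fin n, yLinv n (j + 1) ^ ℓ := by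
        rw [← prod_mul_distrib]; rfl
    _ = sing0 n (∏ j : Fin n, taut n ℓ ζ t j) * ∏ j : Fin n, yLinv n j ^ ℓ := by
        rw [← sing0_prod]
        congr 1
        exact Fintype.prod_equiv (Equiv.addRight (1 : Fin n))
          (fun j => yLinv n (j + 1) ^ ℓ) (fun j => yLinv n j ^ ℓ) (fun j => rfl)
    _ = _ := by rw [prod_taut, prod_pow]

end TGHA

open TGHA in
/-- In `ℂ[y₁^±,…,y_n^±]`, with `ã_i = y_i^ℓ - τ̃_i y_{i+1}^{-ℓ}`,
`Σ_{{i₁<⋯<i_k}∈J} τ̃_{i₁}⋯τ̃_{i_k} ã^{δ-ε_{i₁}-⋯-ε_{i_k}} = (y₁⋯y_n)^ℓ + (-1)^{nℓ} (τ₁⋯τ_n)^ℓ (y₁⋯y_n)^{-ℓ}`. -/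
theorem statement8 (n ℓ : ℕ) [NeZero n] (hn : 3 ≤ n) (hℓ : 2 ≤ ℓ)
    (ζ : ℂ) (hζ : IsPrimitiveRoot ζ ℓ) (t : Fin n → ℂ) :
    ∑ S ∈ Jset n, (∏ i ∈ S, taut n ℓ ζ t i) • ∏ j : Fin n, atilde n ℓ ζ t j ^ expS n S j =
      (∏ j : Fin n, yL n j) ^ ℓ +
        ((-1 : ℂ) ^ (n * ℓ) * (∏ i : Fin n, tau n ζ t i) ^ ℓ) •
          (∏ j : Fin n, yLinv n j) ^ ℓ := by

  classical
  have hn0 : 0 < n := by omega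
  haveI : Nonempty (Fin n) := ⟨⟨0, hn0⟩⟩
  -- the summand as a function of the pair (S, T)
  set F : Finset (Fin n) → Finset (Fin n) → AddMonoidAlgebra ℂ (Fin n → ℤ) :=
    fun S T => (∏ i ∈ S, sing0 n (taut n ℓ ζ t i)) *
      ((∏ j ∈ T, -(bb n ℓ ζ t j)) * ∏ j ∈ cset n S \ T, aa n ℓ j) with hF
  have step1 : ∀ S ∈ Jset n,
      (∏ i ∈ S, taut n ℓ ζ t i) • ∏ j : Fin n, atilde n ℓ ζ t j ^ expS n S j =
        ∑ T ∈ (cset n S).powerset, F S T := by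
    intro S _
    rw [smul_eq_sing0_mul, sing0_prod, prod_atilde_expS,
      Finset.prod_congr rfl fun j _ => atilde_eq n ℓ ζ t j,
      Finset.prod_add, Finset.mul_sum]
  rw [Finset.sum_congr rfl step1,
    Finset.sum_sigma' (Jset n) (fun S => (cset n S).powerset) (fun S T => F S T)]
  rw [Finset.sum_nbij' (t := ((Finset.univ : Finset (Fin n)).powerset).sigma fun U => (dset n U).powerset)
    (g := fun q => F q.2 (q.1 \ q.2))
    (i := fun p => ⟨p.1 ∪ p.2, p.1⟩) (j := fun q => ⟨q.2, q.1 \ q.2⟩)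
    (by
      rintro ⟨S, T⟩ hp
      rw [Finset.mem_sigma] at hp ⊢
      exact ⟨Finset.mem_powerset.mpr (Finset.subset_univ _),
        Finset.mem_powerset.mpr (subset_dset_union n hp.1 (Finset.mem_powerset.mp hp.2))⟩)
    (by
      rintro ⟨U, S⟩ hq
      rw [Finset.mem_sigma] at hq ⊢
      obtain ⟨h1, h2⟩ := of_subset_dset n (Finset.mem_powerset.mp hq.2)
      exact ⟨h1, Finset.mem_powerset.mpr h2⟩)
    (by
      rintro ⟨S, T⟩ hp
      rw [Finset.mem_sigma] at hp
      have : (S ∪ T) \ S = T :=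
        Finset.union_sdiff_cancel_left (disjoint_of_subset_cset n (Finset.mem_powerset.mp hp.2))
      simp only [this])
    (by
      rintro ⟨U, S⟩ hq
      rw [Finset.mem_sigma] at hq
      have hSU : S ⊆ U := (Finset.mem_powerset.mp hq.2).trans (dset_subset n)
      have : S ∪ U \ S = U := Finset.union_sdiff_of_subset hSU
      simp only [this])
    (by
      rintro ⟨S, T⟩ hp
      rw [Finset.mem_sigma] at hp
      have : (S ∪ T) \ S = T :=
        Finset.union_sdiff_cancel_left (disjoint_of_subset_cset n (Finset.mem_powerset.mp hp.2))
      simp only [this])]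
  rw [Finset.sum_sigma ((Finset.univ : Finset (Fin n)).powerset) (fun U => (dset n U).powerset)
    (fun q => F q.2 (q.1 \ q.2))]
  have step2 : ∀ U ∈ ((Finset.univ : Finset (Fin n)).powerset),
      (∑ S ∈ (dset n U).powerset, F S (U \ S)) =
        (if dset n U = ∅ then 1 else 0) * ((-1) ^ U.card *
          ((∏ j ∈ U, bb n ℓ ζ t j) * ∏ j ∈ Finset.univ \ U, aa n ℓ j)) := by
    intro U _
    have : ∀ S ∈ (dset n U).powerset, F S (U \ S) =
        (-1) ^ (U \ S).card * ((∏ j ∈ U, bb n ℓ ζ t j) * ∏ j ∈ Finset.univ \ U, aa n ℓ j) := by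
      intro S hS
      exact term_eq n ℓ ζ t (Finset.mem_powerset.mp hS)
    rw [Finset.sum_congr rfl this, ← Finset.sum_mul, sign_sum, mul_assoc]
  rw [Finset.sum_congr rfl step2]
  rw [Finset.sum_eq_add (∅ : Finset (Fin n)) (Finset.univ : Finset (Fin n))
    (Ne.symm (Finset.nonempty_iff_ne_empty.mp Finset.univ_nonempty))
    (by
      intro U _ hU
      have hd : dset n U ≠ ∅ := fun h => ((dset_eq_empty_iff n).mp h).elim hU.1 hU.2
      rw [if_neg hd, zero_mul])
    (fun h => absurd (Finset.mem_powerset.mpr (Finset.empty_subset _)) h)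
    (fun h => absurd (Finset.mem_powerset.mpr (Finset.subset_univ _)) h)]
  have hterm1 : (if dset n (∅ : Finset (Fin n)) = ∅ then (1 : AddMonoidAlgebra ℂ (Fin n → ℤ))
      else 0) * ((-1) ^ (∅ : Finset (Fin n)).card *
        ((∏ j ∈ (∅ : Finset (Fin n)), bb n ℓ ζ t j) * ∏ j ∈ Finset.univ \ (∅ : Finset (Fin n)),
          aa n ℓ j)) = (∏ j : Fin n, yL n j) ^ ℓ := by
    rw [if_pos (by simp [dset])]
    simp only [Finset.card_empty, pow_zero, Finset.prod_empty, Finset.sdiff_empty, one_mul]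
    rw [← Finset.prod_pow]
    rfl
  have hterm2 : (if dset n (Finset.univ : Finset (Fin n)) = ∅ then (1 : AddMonoidAlgebra ℂ (Fin n → ℤ))
      else 0) * ((-1) ^ (Finset.univ : Finset (Fin n)).card *
        ((∏ j ∈ (Finset.univ : Finset (Fin n)), bb n ℓ ζ t j) * ∏ j ∈ Finset.univ \ (Finset.univ : Finset (Fin n)),
          aa n ℓ j)) =
      ((-1 : ℂ) ^ (n * ℓ) * (∏ i : Fin n, tau n ζ t i) ^ ℓ) • (∏ j : Fin n, yLinv n j) ^ ℓ := by
    rw [if_pos (by simp [dset]), one_mul, Finset.sdiff_self, Finset.prod_empty, mul_one, prod_bb,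
      smul_eq_sing0_mul, Finset.card_univ, Fintype.card_fin, ← mul_assoc]
    congr 1
    rw [← sing0_neg_one, sing0_pow, sing0_mul_sing0]
    congr 1
    obtain ⟨m, rfl⟩ : ∃ m, ℓ = m + 1 := ⟨ℓ - 1, by omega⟩
    have hmm : n * (m + 1 - 1) = n * m := by simp
    rw [hmm, ← mul_assoc, ← pow_add, show n + n * m = n * (m + 1) from by ring]
  rw [hterm1, hterm2]
end
end

section
/- The subalgebra of G-invariant elements of the polynomial algebra ℂ[x₁,…,x_n] is generated as a ℂ-algebra by x₁^ℓ, …, x_n^ℓ, and x₁x₂⋯x_n. -/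
/-!
Common setup for the twisted graded Hecke algebra associated to the homocyclic
group `G ≅ (ℤ/ℓℤ)^{n-1}` (Gan–Highfield, "Center of twisted graded Hecke
algebras for homocyclic groups").

All indices are 0-based: the paper's `x_i, g_i, t_i, τ_i` (for `i = 1, …, n`)
correspond to index `i - 1 : Fin n` here; subscripts are taken mod `n` via the
(wrap-around) addition of `Fin n`.
-/

noncomputable section

namespace TGHA

/-- The action of a group element `g = diag(ζ^{a 0}, …, ζ^{a (n-1)})` on the polynomial
algebra `ℂ[x₁,…,x_n]`, determined by `g ⬝ x_i = ζ^{a_i} x_i`. -/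
def actG (n ℓ : ℕ) (ζ : ℂ) (a : Fin n → ZMod ℓ) :
    MvPolynomial (Fin n) ℂ →ₐ[ℂ] MvPolynomial (Fin n) ℂ :=
  MvPolynomial.aeval fun i => zp ℓ ζ (a i) • MvPolynomial.X i

end TGHA


section Statement12Aux

open MvPolynomial TGHA

variable (n ℓ : ℕ) [NeZero n] (ζ : ℂ)

omit [NeZero n] in
lemma actG_monomial (a : Fin n → ZMod ℓ) (d : Fin n →₀ ℕ) (c : ℂ) :
    actG n ℓ ζ a (monomial d c) = ζ ^ (∑ i, (a i).val * d i) • monomial d c := by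
  show aeval (fun i => (ζ ^ (a i).val) • X i) (monomial d c) = _
  rw [aeval_monomial]
  simp only [smul_eq_C_mul, Finsupp.prod, mul_pow, ← C_pow, ← pow_mul,
    Finset.prod_mul_distrib, ← map_prod, Finset.prod_pow_eq_pow_sum,
    prod_X_pow_eq_monomial, algebraMap_eq]
  rw [Finset.sum_subset (Finset.subset_univ d.support) (by
    intro i _ hi
    simp [Finsupp.notMem_support_iff.mp hi])]
  rw [show (monomial d c : MvPolynomial (Fin n) ℂ) = C c * monomial d 1 by
    rw [C_mul_monomial, mul_one]]
  ring

omit [NeZero n] in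
lemma actG_coeff (a : Fin n → ZMod ℓ) (P : MvPolynomial (Fin n) ℂ) (d : Fin n →₀ ℕ) :
    coeff d (actG n ℓ ζ a P) = ζ ^ (∑ i, (a i).val * d i) * coeff d P := by
  conv_lhs => rw [P.as_sum]
  rw [map_sum]
  simp only [actG_monomial, coeff_sum, coeff_smul, coeff_monomial, smul_eq_mul, mul_ite, mul_zero]
  rw [Finset.sum_ite_eq' P.support d fun d' => ζ ^ (∑ i, (a i).val * d' i) * coeff d' P]
  by_cases hd : d ∈ P.support
  · simp [hd]
  · simp [hd, notMem_support_iff.mp hd]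

lemma inv_support [NeZero ℓ] (hζ : IsPrimitiveRoot ζ ℓ) (P : MvPolynomial (Fin n) ℂ)
    (hP : ∀ a ∈ Gsub n ℓ, actG n ℓ ζ a P = P) (d : Fin n →₀ ℕ) (hd : d ∈ P.support)
    (a : Fin n → ZMod ℓ) (ha : a ∈ Gsub n ℓ) :
    ∑ i, a i * (d i : ZMod ℓ) = 0 := by
  have h := congrArg (coeff d) (hP a ha)
  rw [actG_coeff] at h
  have hc : coeff d P ≠ 0 := mem_support_iff.mp hd
  have h1 : ζ ^ (∑ i, (a i).val * d i) = 1 := by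
    have := mul_right_cancel₀ hc (h.trans (one_mul (coeff d P)).symm)
    exact this
  have h2 : ℓ ∣ ∑ i, (a i).val * d i := (hζ.pow_eq_one_iff_dvd _).mp h1
  have h3 : ((∑ i, (a i).val * d i : ℕ) : ZMod ℓ) = 0 :=
    (ZMod.natCast_eq_zero_iff _ ℓ).mpr h2
  push_cast at h3
  simpa [ZMod.natCast_val, ZMod.cast_id] using h3

end Statement12Aux

open TGHA in
/-- The subalgebra of `G`-invariants of `ℂ[x₁,…,x_n]` is generated as a
`ℂ`-algebra by `x₁^ℓ, …, x_n^ℓ` and `x₁x₂⋯x_n`. -/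
theorem statement12 (n ℓ : ℕ) [NeZero n] (hn : 3 ≤ n) (hℓ : 2 ≤ ℓ)
    (ζ : ℂ) (hζ : IsPrimitiveRoot ζ ℓ) :
    {P : MvPolynomial (Fin n) ℂ | ∀ a ∈ Gsub n ℓ, actG n ℓ ζ a P = P} =
      ↑(Algebra.adjoin ℂ
        (insert (∏ i : Fin n, MvPolynomial.X i)
          (Set.range fun i : Fin n => (MvPolynomial.X i : MvPolynomial (Fin n) ℂ) ^ ℓ))) := by
  classical
  haveI : NeZero ℓ := ⟨by omega⟩
  have hz1 : ζ ^ ℓ = 1 := hζ.pow_eq_one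
  ext P
  simp only [Set.mem_setOf_eq, SetLike.mem_coe]
  constructor
  · intro hP
    rw [P.as_sum]
    apply Subalgebra.sum_mem
    intro d hd
    -- exponents are congruent mod ℓ
    have hmod : ∀ i : Fin n, d i % ℓ = d 0 % ℓ := by
      intro i
      by_cases hi : i = 0
      · rw [hi]
      · have ha : (Pi.single i (1 : ZMod ℓ) - Pi.single (0 : Fin n) 1) ∈ Gsub n ℓ := by
          show ∑ k, _ = 0
          simp [Finset.sum_sub_distrib, Finset.sum_pi_single']
        have h := inv_support n ℓ ζ hζ P hP d hd _ ha
        have h' : (d i : ZMod ℓ) - (d 0 : ZMod ℓ) = 0 := by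
          rw [← h]
          simp [Pi.single_apply, sub_mul, Finset.sum_sub_distrib, ite_mul,
            Finset.sum_ite_eq']
        have h'' : (d i : ZMod ℓ) = ((d 0 : ℕ) : ZMod ℓ) := by
          rwa [sub_eq_zero] at h'
        exact (ZMod.natCast_eq_natCast_iff' _ _ _).mp h''
    have huniv : ∏ i : Fin n, (MvPolynomial.X i : MvPolynomial (Fin n) ℂ) ^ d i =
        MvPolynomial.monomial d 1 := by
      rw [← MvPolynomial.prod_X_pow_eq_monomial]
      exact (Finset.prod_subset (Finset.subset_univ _) (fun i _ hi => by
        simp [Finsupp.notMem_support_iff.mp hi])).symm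
    have hsplit : MvPolynomial.monomial d (MvPolynomial.coeff d P) =
        MvPolynomial.coeff d P •
          ((∏ i : Fin n, MvPolynomial.X i) ^ (d 0 % ℓ) *
            ∏ i : Fin n, ((MvPolynomial.X i : MvPolynomial (Fin n) ℂ) ^ ℓ) ^ (d i / ℓ)) := by
      rw [← Finset.prod_pow, ← Finset.prod_mul_distrib]
      simp only [← pow_mul, ← pow_add]
      have : ∀ i : Fin n, d 0 % ℓ + ℓ * (d i / ℓ) = d i := by
        intro i
        rw [← hmod i]
        exact Nat.mod_add_div (d i) ℓ
      simp only [this, huniv, MvPolynomial.smul_monomial, smul_eq_mul, mul_one]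
    rw [hsplit]
    refine Subalgebra.smul_mem _ (Subalgebra.mul_mem _ ?_ ?_) _
    · exact Subalgebra.pow_mem _ (Algebra.subset_adjoin (Set.mem_insert _ _)) _
    · exact Subalgebra.prod_mem _ fun i _ =>
        Subalgebra.pow_mem _ (Algebra.subset_adjoin (Set.mem_insert_of_mem _ (Set.mem_range_self i))) _
  · intro hP a ha
    have hle : Algebra.adjoin ℂ
        (insert (∏ i : Fin n, MvPolynomial.X i)
          (Set.range fun i : Fin n => (MvPolynomial.X i : MvPolynomial (Fin n) ℂ) ^ ℓ)) ≤
        AlgHom.equalizer (actG n ℓ ζ a) (AlgHom.id ℂ _) := by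
      apply Algebra.adjoin_le
      rintro x (rfl | ⟨i, rfl⟩)
      · show actG n ℓ ζ a (∏ i : Fin n, MvPolynomial.X i) = ∏ i : Fin n, MvPolynomial.X i
        have key : ζ ^ (∑ i, (a i).val) = 1 := by
          refine (hζ.pow_eq_one_iff_dvd _).mpr ?_
          refine (ZMod.natCast_eq_zero_iff _ ℓ).mp ?_
          push_cast
          simpa [ZMod.natCast_val, ZMod.cast_id] using (show ∑ i, a i = 0 from ha)
        show MvPolynomial.aeval (fun i => zp ℓ ζ (a i) • MvPolynomial.X i) _ = _
        rw [map_prod]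
        simp only [MvPolynomial.aeval_X, zp, MvPolynomial.smul_eq_C_mul,
          Finset.prod_mul_distrib, ← map_prod, Finset.prod_pow_eq_pow_sum, key, map_one, one_mul]
      · show actG n ℓ ζ a (MvPolynomial.X i ^ ℓ) = MvPolynomial.X i ^ ℓ
        show MvPolynomial.aeval (fun i => zp ℓ ζ (a i) • MvPolynomial.X i) _ = _
        rw [map_pow]
        simp only [MvPolynomial.aeval_X, zp, smul_pow]
        rw [← pow_mul, mul_comm, pow_mul, hz1, one_pow, one_smul]
    exact hle hP
end
end
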